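/- Let A ∈ ℂ^{m×n}, W ∈ ℂ^{n×m} with k = max(ind(AW), ind(WA)), and set B = (AW)^k, C = ((WA)^k)^*, X = A^{⊕,W}. Then there exist matrices S ∈ ℂ^{m×m} and T ∈ ℂ^{n×n} with X = B*S*X and X = X*T*C, and moreover X*(W*A*W)*B = B and C*(W*A*W)*X = C. That is, A^{⊕,W} is the (B,C)-inverse of WAW. -/

import Mathlib

open Matrix

noncomputable def matIndex {n : ℕ} (M : Matrix (Fin n) (Fin n) ℂ) : ℕ :=
  sInf {j | (M ^ j).rank = (M ^ (j + 1)).rank}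

def IsCoreEP {n : ℕ} (M X : Matrix (Fin n) (Fin n) ℂ) : Prop :=
  X * M ^ (matIndex M + 1) = M ^ (matIndex M) ∧ M * X * X = X ∧ (M * X)ᴴ = M * X

def IsMP {m n : ℕ} (A : Matrix (Fin m) (Fin n) ℂ) (X : Matrix (Fin n) (Fin m) ℂ) : Prop :=
  A * X * A = A ∧ X * A * X = X ∧ (A * X)ᴴ = A * X ∧ (X * A)ᴴ = X * A

def IsDrazin {n : ℕ} (M X : Matrix (Fin n) (Fin n) ℂ) : Prop :=
  M * X = X * M ∧ X * M * X = X ∧ M ^ (matIndex M + 1) * X = M ^ (matIndex M)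

lemma aux_rank_anti {p : ℕ} (N : Matrix (Fin p) (Fin p) ℂ) (j : ℕ) :
    (N ^ (j+1)).rank ≤ (N ^ j).rank := by
  rw [pow_succ']
  exact Matrix.rank_mul_le_right N (N ^ j)

lemma aux_exists_stab {p : ℕ} (N : Matrix (Fin p) (Fin p) ℂ) :
    ∃ j, (N ^ j).rank = (N ^ (j+1)).rank := by
  by_contra h
  push_neg at h
  have hd : ∀ j, (N ^ (j+1)).rank < (N ^ j).rank := fun j =>
    lt_of_le_of_ne (aux_rank_anti N j) (fun e => h j e.symm)
  have key : ∀ j, (N ^ j).rank + j ≤ (N ^ 0).rank := by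
    intro j
    induction j with
    | zero => simp
    | succ j ih => have := hd j; omega
  have h1 := key (p + 1)
  have h2 : (N ^ 0).rank ≤ p := by
    simpa using Matrix.rank_le_card_width (N ^ 0)
  omega

lemma aux_matIndex_spec {p : ℕ} (N : Matrix (Fin p) (Fin p) ℂ) :
    (N ^ matIndex N).rank = (N ^ (matIndex N + 1)).rank :=
  Nat.sInf_mem (aux_exists_stab N)

lemma aux_range_pow {p : ℕ} (N : Matrix (Fin p) (Fin p) ℂ) (k : ℕ) (hk : matIndex N ≤ k) :
    LinearMap.range (N ^ (k+1)).mulVecLin = LinearMap.range (N ^ k).mulVecLin := by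
  induction k, hk using Nat.le_induction with
  | base =>
    have hle : LinearMap.range (N ^ (matIndex N + 1)).mulVecLin ≤
        LinearMap.range (N ^ matIndex N).mulVecLin := by
      rw [pow_succ, Matrix.mulVecLin_mul]
      exact fun x hx => by
        obtain ⟨y, hy⟩ := hx
        exact ⟨N.mulVecLin y, hy⟩
    refine Submodule.eq_of_le_of_finrank_le hle ?_
    have h := aux_matIndex_spec N
    rw [Matrix.rank, Matrix.rank] at h
    omega
  | succ k hk ih =>
    have e1 : (N ^ (k+1+1)) = N * N ^ (k+1) := by rw [pow_succ']
    have e2 : (N ^ (k+1)) = N * N ^ k := by rw [pow_succ']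
    rw [e1, Matrix.mulVecLin_mul, LinearMap.range_comp, ih,
      ← LinearMap.range_comp, ← Matrix.mulVecLin_mul, ← e2]
    exact ih

lemma aux_exists_Z {p : ℕ} (N : Matrix (Fin p) (Fin p) ℂ) (k : ℕ) (hk : matIndex N ≤ k) :
    ∃ Z : Matrix (Fin p) (Fin p) ℂ, N ^ k = N ^ (k+1) * Z := by
  have hr := aux_range_pow N k hk
  have hcol : ∀ j : Fin p, ∃ z : Fin p → ℂ, (N ^ (k+1)) *ᵥ z = (N ^ k) *ᵥ Pi.single j 1 := by
    intro j
    have : (N ^ k) *ᵥ Pi.single j 1 ∈ LinearMap.range (N ^ (k+1)).mulVecLin := by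
      rw [hr]; exact ⟨Pi.single j 1, rfl⟩
    obtain ⟨z, hz⟩ := this
    exact ⟨z, hz⟩
  choose z hz using hcol
  refine ⟨Matrix.of (fun i j => z j i), ?_⟩
  ext i j
  have := congrFun (hz j) i
  simp only [Matrix.mulVec_single, mul_one, MulOpposite.op_one, one_smul, Matrix.col_apply] at this
  rw [← this]
  simp [Matrix.mul_apply, Matrix.mulVec, dotProduct]

theorem stmt18 {m n : ℕ} (A : Matrix (Fin m) (Fin n) ℂ) (W : Matrix (Fin n) (Fin m) ℂ)
    (Y : Matrix (Fin n) (Fin n) ℂ) (k : ℕ)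
    (hk : k = max (matIndex (A * W)) (matIndex (W * A))) (hY : IsCoreEP (W * A) Y) :
    (∃ S : Matrix (Fin m) (Fin m) ℂ, A * (Y * Y) = (A * W) ^ k * S * (A * (Y * Y))) ∧
    (∃ T : Matrix (Fin n) (Fin n) ℂ, A * (Y * Y) = (A * (Y * Y)) * T * ((W * A) ^ k)ᴴ) ∧
    (A * (Y * Y)) * (W * A * W) * (A * W) ^ k = (A * W) ^ k ∧
    ((W * A) ^ k)ᴴ * (W * A * W) * (A * (Y * Y)) = ((W * A) ^ k)ᴴ := by
  set M : Matrix (Fin n) (Fin n) ℂ := W * A with hM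
  obtain ⟨h1, h2, h3⟩ := hY
  set i := matIndex M with hi
  have hik : i ≤ k := hk ▸ le_max_right _ _
  have hjk : matIndex (A * W) ≤ k := hk ▸ le_max_left _ _
  have h2' : M * (Y * Y) = Y := by rw [← mul_assoc]; exact h2
  -- f1 : Y = M^j * Y^(j+1)
  have f1 : ∀ j, Y = M ^ j * Y ^ (j+1) := by
    intro j
    induction j with
    | zero => simp
    | succ j ih =>
      have e : M ^ (j+1) * Y ^ (j+1+1) = M ^ j * (M * Y * Y * Y ^ j) := by
        rw [pow_succ M j, pow_succ' Y (j+1), pow_succ' Y j]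
        simp only [mul_assoc]
      rw [e, h2, ← pow_succ' Y j]
      exact ih
  -- f2 : Y * M * Y = Y
  have f2 : Y * M * Y = Y := by
    nth_rewrite 2 [f1 i]
    have e : Y * M * (M ^ i * Y ^ (i+1)) = Y * M ^ (i+1) * Y ^ (i+1) := by
      rw [pow_succ' M i]; simp only [mul_assoc]
    rw [e, h1]
    exact (f1 i).symm
  have f2' : Y * (M * Y) = Y := by rw [← mul_assoc]; exact f2
  -- f3 : M^(j+1) * Y^(j+1) = M * Y
  have f3 : ∀ j, M ^ (j+1) * Y ^ (j+1) = M * Y := by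
    intro j
    induction j with
    | zero => simp
    | succ j ih =>
      have e : M ^ (j+1+1) * Y ^ (j+1+1) = M * (M ^ (j+1) * Y ^ (j+1)) * Y := by
        rw [pow_succ' M (j+1), pow_succ Y (j+1)]
        simp only [mul_assoc]
      rw [e, ih, mul_assoc, h2]
  -- f4 : Y * M^(k+1) = M^k
  have hki : i + (k - i) = k := by omega
  have f4 : Y * M ^ (k+1) = M ^ k := by
    have e : Y * M ^ (k+1) = Y * M ^ (i+1) * M ^ (k - i) := by
      rw [mul_assoc, ← pow_add]
      congr 2
      omega
    rw [e, h1, ← pow_add, hki]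
  -- f5 : M * Y * M^k = M^k
  have f5 : M * Y * M ^ k = M ^ k := by
    have e : M * Y * M ^ i = M ^ i := by
      calc M * Y * M ^ i = M * Y * (Y * M ^ (i+1)) := by rw [h1]
        _ = M * Y * Y * M ^ (i+1) := by simp only [mul_assoc]
        _ = Y * M ^ (i+1) := by rw [h2]
        _ = M ^ i := h1
    calc M * Y * M ^ k = M * Y * (M ^ i * M ^ (k-i)) := by rw [← pow_add, hki]
      _ = (M * Y * M ^ i) * M ^ (k-i) := by simp only [mul_assoc]
      _ = M ^ i * M ^ (k-i) := by rw [e]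
      _ = M ^ k := by rw [← pow_add, hki]
  -- comm : A * M^j = (A*W)^j * A
  have comm : ∀ j, A * M ^ j = (A * W) ^ j * A := by
    intro j
    induction j with
    | zero => simp
    | succ j ih =>
      rw [pow_succ M j, ← Matrix.mul_assoc A (M ^ j) M, ih, hM, pow_succ (A * W) j]
      simp only [Matrix.mul_assoc]
  -- s1 : W * (A*W)^j = M^j * W
  have s1 : ∀ j, W * (A * W) ^ j = M ^ j * W := by
    intro j
    induction j with
    | zero => simp
    | succ j ih =>
      rw [pow_succ (A * W) j, ← Matrix.mul_assoc W ((A * W) ^ j) (A * W), ih,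
        pow_succ M j, hM]
      simp only [Matrix.mul_assoc]
  have hYY : Y * Y = M ^ k * Y ^ (k+1+1) := by
    calc Y * Y = (M ^ k * Y ^ (k+1)) * Y := by rw [← f1 k]
      _ = M ^ k * Y ^ (k+1+1) := by rw [Matrix.mul_assoc, ← pow_succ]
  refine ⟨⟨A * Y ^ (k+1) * W, ?_⟩, ⟨(M * Y ^ (k+1))ᴴ, ?_⟩, ?_, ?_⟩
  · -- claim 1
    have step : (A * W) ^ k * (A * Y ^ (k+1) * W) * (A * (Y * Y))
        = (A * W) ^ k * A * (Y ^ (k+1) * (M * (Y * Y))) := by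
      rw [hM]; simp only [Matrix.mul_assoc]
    rw [step, h2', ← pow_succ, ← comm k, Matrix.mul_assoc A (M ^ k) (Y ^ (k+1+1)), ← hYY]
  · -- claim 2
    have e : M ^ k * (M * Y ^ (k+1)) = M * Y := by
      rw [← Matrix.mul_assoc, ← pow_succ]
      exact f3 k
    have e2 : (M * Y ^ (k+1))ᴴ * (M ^ k)ᴴ = (M * Y)ᴴ := by
      rw [← conjTranspose_mul, e]
    have c1 : A * (Y * Y) * (M * Y) = A * (Y * Y) := by
      rw [Matrix.mul_assoc, Matrix.mul_assoc, f2']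
    have c2 : A * (Y * Y) * (M * Y ^ (k+1))ᴴ * (M ^ k)ᴴ = A * (Y * Y) * (M * Y) := by
      rw [Matrix.mul_assoc (A * (Y * Y)), e2, h3]
    exact (c2.trans c1).symm
  · -- claim 3
    obtain ⟨Z, hZ⟩ := aux_exists_Z (A * W) k hjk
    have s2 : M ^ k * W = M ^ (k+1) * (W * Z) := by
      rw [← s1 k, hZ, ← Matrix.mul_assoc W ((A * W) ^ (k+1)) Z, s1 (k+1)]
      simp only [Matrix.mul_assoc]
    calc A * (Y * Y) * (M * W) * (A * W) ^ k
        = A * (Y * (Y * (M ^ (k+1) * W))) := by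
          simp only [Matrix.mul_assoc]
          rw [s1 k, ← Matrix.mul_assoc M (M ^ k) W, ← pow_succ' M k]
      _ = A * (Y * (M ^ k * W)) := by rw [← Matrix.mul_assoc Y (M ^ (k+1)) W, f4]
      _ = A * (Y * (M ^ (k+1) * (W * Z))) := by rw [s2]
      _ = A * (M ^ k * (W * Z)) := by rw [← Matrix.mul_assoc Y (M ^ (k+1)) (W * Z), f4]
      _ = (A * W) ^ (k+1) * Z := by
          simp only [← Matrix.mul_assoc]
          rw [comm k, Matrix.mul_assoc ((A * W) ^ k) A W, ← pow_succ]
      _ = (A * W) ^ k := hZ.symm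
  · -- claim 4
    have e : M * W * (A * (Y * Y)) = M * Y := by
      simp only [Matrix.mul_assoc]
      rw [← Matrix.mul_assoc W A (Y * Y), ← hM, h2']
    rw [Matrix.mul_assoc, e, ← h3, ← conjTranspose_mul, f5]
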